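/- Let V : ℝ → ℝ be differentiable with V(t) ≥ 0 for all t ≥ 0, and suppose V'(t) ≤ -c · √(2 V(t)) for all t ≥ 0, where c > 0. Then V(t) = 0 for all t ≥ √(2 V(0)) / c. -/
import Mathlib


/-- Finite-time comparison lemma: if `V ≥ 0` is differentiable with
`V' t ≤ -c √(2 V t)` for all `t ≥ 0` and `c > 0`, then `V t = 0` for every
`t ≥ √(2 V 0) / c`. -/
theorem finite_time_comparison
    (c : ℝ) (hc : 0 < c)
    (V : ℝ → ℝ) (hV : Differentiable ℝ V)
    (hpos : ∀ t : ℝ, 0 ≤ t → 0 ≤ V t)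
    (hdecr : ∀ t : ℝ, 0 ≤ t → deriv V t ≤ -c * Real.sqrt (2 * V t)) :
    ∀ t : ℝ, Real.sqrt (2 * V 0) / c ≤ t → V t = 0 := by
  intro t ht
  set T := Real.sqrt (2 * V 0) / c with hTdef
  have hT0 : 0 ≤ T := div_nonneg (Real.sqrt_nonneg _) hc.le
  have ht0 : 0 ≤ t := le_trans hT0 ht
  have hanti : AntitoneOn V (Set.Ici (0 : ℝ)) := by
    apply antitoneOn_of_deriv_nonpos (convex_Ici 0) hV.continuous.continuousOn
      hV.differentiableOn
    intro x hx
    rw [interior_Ici] at hx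
    have h1 := hdecr x hx.le
    have h2 : 0 ≤ Real.sqrt (2 * V x) := Real.sqrt_nonneg _
    nlinarith
  have hVT : V T = 0 := by
    by_contra hne
    have hVTpos : 0 < V T := lt_of_le_of_ne (hpos T hT0) (Ne.symm hne)
    have hTpos : 0 < T := by
      rcases hT0.lt_or_eq with h | h
      · exact h
      · exfalso
        have h0 : Real.sqrt (2 * V 0) = 0 := by
          have hcT : Real.sqrt (2 * V 0) = c * T := by rw [hTdef]; field_simp
          rw [hcT, ← h, mul_zero]
        have h2le : 2 * V 0 ≤ 0 := Real.sqrt_eq_zero'.mp h0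
        have hV0 : V 0 = 0 := le_antisymm (by linarith) (hpos 0 le_rfl)
        exact hne (by rw [← h]; exact hV0)
    have hVpos : ∀ s ∈ Set.Icc (0 : ℝ) T, 0 < V s := fun s hs =>
      lt_of_lt_of_le hVTpos (hanti hs.1 (Set.mem_Ici.mpr hT0) hs.2)
    have hhanti : AntitoneOn (fun s => Real.sqrt (2 * V s) + c * s) (Set.Icc 0 T) := by
      apply antitoneOn_of_deriv_nonpos (convex_Icc 0 T)
      · exact ((Real.continuous_sqrt.comp (continuous_const.mul hV.continuous)).add
          (continuous_const.mul continuous_id)).continuousOn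
      · intro x hx
        rw [interior_Icc] at hx
        have hxV := hVpos x ⟨hx.1.le, hx.2.le⟩
        have hne2 : (2 : ℝ) * V x ≠ 0 := by positivity
        exact ((((hV x).hasDerivAt.const_mul 2).sqrt hne2).add
          ((hasDerivAt_id x).const_mul c)).differentiableAt.differentiableWithinAt
      · intro x hx
        rw [interior_Icc] at hx
        have hxV := hVpos x ⟨hx.1.le, hx.2.le⟩
        have hne2 : (2 : ℝ) * V x ≠ 0 := by positivity
        have hd : HasDerivAt (fun s => Real.sqrt (2 * V s) + c * s)
            (2 * deriv V x / (2 * Real.sqrt (2 * V x)) + c * 1) x :=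
          (((hV x).hasDerivAt.const_mul 2).sqrt hne2).add
            ((hasDerivAt_id x).const_mul c)
        rw [hd.deriv]
        have hs : 0 < Real.sqrt (2 * V x) := Real.sqrt_pos.mpr (by positivity)
        have h1 := hdecr x hx.1.le
        rw [div_add' _ _ _ (by positivity), div_nonpos_iff]
        right
        constructor
        · nlinarith
        · positivity
    have hle := hhanti (Set.left_mem_Icc.mpr hT0) (Set.right_mem_Icc.mpr hT0) hT0
    simp only [mul_zero, add_zero] at hle
    have hcT : c * T = Real.sqrt (2 * V 0) := by
      rw [hTdef]; field_simp
    have hsT : 0 < Real.sqrt (2 * V T) := Real.sqrt_pos.mpr (by positivity)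
    linarith
  have h1 : V t ≤ V T := hanti (Set.mem_Ici.mpr hT0) (Set.mem_Ici.mpr ht0) ht
  have h2 : 0 ≤ V t := hpos t ht0
  linarith [hVT ▸ h1]
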